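/- arXiv:1811.11993 — 6 statements merged into one kernel-verified Lean document; each statement's English description precedes it below -/
import Mathlib

section
/- Let a, b, c, q ∈ ℝ with q ≠ 0, and suppose c ≠ 0 or a + b ≠ 0. Then the equality of sl(2,ℝ)-elements 2c(b−a)E₁ + 2c(b−a)E₂ + 2(a²−b²)E₃ = q·(−(c/√2)(E₁+E₂) + ((a+b)/√2)E₃) holds if and only if a − b = q/(2√2). (Equivalently: the one-parameter subgroup exp(t(aE₁+bE₂+cE₃)) is a contact magnetic curve with strength q in SL(2,ℝ), i.e. U(X,X) = qφX, if and only if a − b = q/(2√2).) -/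
open Matrix

/-- The orthonormal basis E₁ = √2·E, E₂ = √2·F, E₃ = H of sl(2,ℝ). -/
noncomputable def E₁ : Matrix (Fin 2) (Fin 2) ℝ := Real.sqrt 2 • !![0, 1; 0, 0]

noncomputable def E₂ : Matrix (Fin 2) (Fin 2) ℝ := Real.sqrt 2 • !![0, 0; 1, 0]

def E₃ : Matrix (Fin 2) (Fin 2) ℝ := !![1, 0; 0, -1]

/-- The one-parameter subgroup exp(t(aE₁+bE₂+cE₃)) is a contact magnetic curve with
strength q ≠ 0 in SL(2,ℝ), i.e. U(X,X) = qφX, if and only if a − b = q/(2√2). -/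
theorem oneParameter_magnetic_iff (a b c q : ℝ) (hq : q ≠ 0)
    (h : c ≠ 0 ∨ a + b ≠ 0) :
    (2 * c * (b - a)) • E₁ + (2 * c * (b - a)) • E₂ + (2 * (a ^ 2 - b ^ 2)) • E₃ =
        q • ((-(c / Real.sqrt 2)) • (E₁ + E₂) + ((a + b) / Real.sqrt 2) • E₃) ↔
      a - b = q / (2 * Real.sqrt 2) := by
  have hs : Real.sqrt 2 > 0 := by positivity
  have hs2 : Real.sqrt 2 * Real.sqrt 2 = 2 := Real.mul_self_sqrt (by norm_num)
  rw [← Matrix.ext_iff]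
  simp only [E₁, E₂, E₃, Fin.forall_fin_two, Matrix.add_apply, Matrix.smul_apply,
    Matrix.cons_val', Matrix.cons_val_zero, Matrix.cons_val_one, Matrix.head_cons,
    Matrix.head_fin_const, Matrix.empty_val', Matrix.cons_val_fin_one, smul_eq_mul, Matrix.of_apply]
  constructor
  · rintro ⟨⟨h00, h01⟩, h10, h11⟩
    rcases h with hc | hab
    · field_simp at h01 ⊢
      have h1 : c * ((a - b) * (2 * Real.sqrt 2) * Real.sqrt 2) = c * (q * Real.sqrt 2) := by
        linear_combination -h01
      have h2 := mul_left_cancel₀ hc h1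
      exact mul_right_cancel₀ (ne_of_gt hs) (by linear_combination h2)
    · field_simp at h00 ⊢
      have h1 : (a + b) * ((a - b) * (2 * Real.sqrt 2)) = (a + b) * q := by
        linear_combination h00
      exact mul_left_cancel₀ hab (by linear_combination h1)
  · intro hab
    have habs : (a - b) * (2 * Real.sqrt 2) = q := by
      field_simp at hab; linarith [hab]
    refine ⟨⟨?_, ?_⟩, ?_, ?_⟩ <;> field_simp
    · linear_combination (a + b) * habs
    · linear_combination (-(c * Real.sqrt 2)) * habs
    · linear_combination (-(c * Real.sqrt 2)) * habs
    · linear_combination (-(a + b)) * habs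
end

section
/- Let q, r, x₀ ∈ ℝ with |q| > 2 and r > 0, and let μ : ℝ → ℝ be differentiable with μ'(s) = |q| − 2cos μ(s) for all s. Define x(s) = r·sin μ(s) + x₀ and y(s) = r·(|q|/2 − cos μ(s)). Then y(s) > 0 for all s, the curve (x, y) is unit-speed in H²(−4), i.e. x'(s)² + y'(s)² = 4y(s)², and it has constant signed curvature |q|, i.e. (x'y'' − x''y')/(4y²) + x'/y = |q|. Moreover x' = 2y·cos μ and y' = 2y·sin μ. -/
/-- The projection to H²(−4) of a Legendre contact magnetic curve of strength q, |q| > 2: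
the curve x = r·sin μ + x₀, y = r·(|q|/2 − cos μ) with μ' = |q| − 2cos μ lies in the upper
half-plane, is unit-speed there, and has constant signed curvature |q|. -/
theorem legendre_projection_circle (q r x₀ : ℝ) (hq : 2 < |q|) (hr : 0 < r)
    (μ : ℝ → ℝ) (hμ : ∀ s, HasDerivAt μ (|q| - 2 * Real.cos (μ s)) s)
    (x y : ℝ → ℝ)
    (hx : ∀ s, x s = r * Real.sin (μ s) + x₀)
    (hy : ∀ s, y s = r * (|q| / 2 - Real.cos (μ s))) :
    (∀ s, 0 < y s) ∧
    (∀ s, deriv x s = 2 * y s * Real.cos (μ s)) ∧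
    (∀ s, deriv y s = 2 * y s * Real.sin (μ s)) ∧
    (∀ s, (deriv x s) ^ 2 + (deriv y s) ^ 2 = 4 * (y s) ^ 2) ∧
    (∀ s,
      (deriv x s * deriv (deriv y) s - deriv (deriv x) s * deriv y s) / (4 * (y s) ^ 2)
        + deriv x s / y s = |q|) := by
  have hypos : ∀ s, 0 < y s := by
    intro s; rw [hy]
    have h1 : Real.cos (μ s) ≤ 1 := Real.cos_le_one _
    nlinarith
  have hxf : x = fun s => r * Real.sin (μ s) + x₀ := funext hx
  have hyf : y = fun s => r * (|q| / 2 - Real.cos (μ s)) := funext hy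
  have hx' : ∀ s, HasDerivAt x (2 * y s * Real.cos (μ s)) s := by
    intro s
    have h := (((hμ s).sin).const_mul r).add_const x₀
    rw [← hxf] at h
    refine h.congr_deriv ?_
    rw [hy]; ring
  have hy' : ∀ s, HasDerivAt y (2 * y s * Real.sin (μ s)) s := by
    intro s
    have h := (((hμ s).cos).const_sub (|q| / 2)).const_mul r
    rw [← hyf] at h
    refine h.congr_deriv ?_
    rw [hy]; ring
  have hdx : ∀ s, deriv x s = 2 * y s * Real.cos (μ s) := fun s => (hx' s).deriv
  have hdy : ∀ s, deriv y s = 2 * y s * Real.sin (μ s) := fun s => (hy' s).deriv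
  have hdxf : deriv x = fun s => 2 * r * ((|q| / 2 - Real.cos (μ s)) * Real.cos (μ s)) := by
    funext s; rw [hdx s, hy]; ring
  have hdyf : deriv y = fun s => 2 * r * ((|q| / 2 - Real.cos (μ s)) * Real.sin (μ s)) := by
    funext s; rw [hdy s, hy]; ring
  have hddx : ∀ s, deriv (deriv x) s =
      8 * y s * Real.sin (μ s) * Real.cos (μ s) - 2 * |q| * y s * Real.sin (μ s) := by
    intro s
    rw [hdxf,
      ((((hμ s).cos.const_sub (|q| / 2)).fun_mul (hμ s).cos).const_mul (2 * r)).deriv, hy]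
    ring
  have hddy : ∀ s, deriv (deriv y) s =
      4 * y s * Real.sin (μ s) ^ 2 + 2 * |q| * y s * Real.cos (μ s)
        - 4 * y s * Real.cos (μ s) ^ 2 := by
    intro s
    rw [hdyf,
      ((((hμ s).cos.const_sub (|q| / 2)).fun_mul (hμ s).sin).const_mul (2 * r)).deriv, hy]
    ring
  refine ⟨hypos, hdx, hdy, ?_, ?_⟩
  · intro s
    have p := Real.sin_sq_add_cos_sq (μ s)
    rw [hdx s, hdy s]
    nlinarith [hypos s]
  · intro s
    have p := Real.sin_sq_add_cos_sq (μ s)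
    have hys := hypos s
    have hyne : y s ≠ 0 := ne_of_gt hys
    have key : deriv x s * deriv (deriv y) s - deriv (deriv x) s * deriv y s
        = (4 * (y s) ^ 2) * (|q| - 2 * Real.cos (μ s)) := by
      rw [hdx s, hdy s, hddx s, hddy s]
      linear_combination (4 * |q| * (y s) ^ 2 - 8 * (y s) ^ 2 * Real.cos (μ s)) * p
    rw [key, hdx s]
    field_simp
    ring
end

section
/- Let σ ∈ (0, π) and let q̄ ∈ ℝ with q̄ > 2·sin σ. Set ω = √(q̄² − 4sin²σ) and define, for s ∈ (−π/ω, π/ω), U(s) = 2·arctan(√((q̄ − 2sin σ)/(q̄ + 2sin σ))·tan(ωs/2)). Then U(0) = 0 and U'(s) + 2·sin σ·cos U(s) − q̄ = 0 for all s ∈ (−π/ω, π/ω). -/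
/-- Explicit solution of the angle ODE U' + 2 sin σ · cos U − q̄ = 0 with U(0) = 0 in the
case q̄ > 2 sin σ: U(s) = 2 arctan(√((q̄−2sinσ)/(q̄+2sinσ))·tan(ωs/2)), ω = √(q̄²−4sin²σ),
on the interval (−π/ω, π/ω). -/
theorem angle_ode_solution (σ qb ω : ℝ) (hσ : σ ∈ Set.Ioo 0 Real.pi)
    (hq : 2 * Real.sin σ < qb)
    (hω : ω = Real.sqrt (qb ^ 2 - 4 * Real.sin σ ^ 2))
    (U : ℝ → ℝ)
    (hU : ∀ s, U s = 2 * Real.arctan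
      (Real.sqrt ((qb - 2 * Real.sin σ) / (qb + 2 * Real.sin σ)) * Real.tan (ω * s / 2))) :
    U 0 = 0 ∧
    ∀ s ∈ Set.Ioo (-(Real.pi / ω)) (Real.pi / ω),
      HasDerivAt U (qb - 2 * Real.sin σ * Real.cos (U s)) s := by
  have hm : 0 < Real.sin σ := Real.sin_pos_of_pos_of_lt_pi hσ.1 hσ.2
  set m := Real.sin σ with hm_def
  have h1 : 0 < qb - 2 * m := by linarith
  have h2 : 0 < qb + 2 * m := by linarith
  have hprod : qb ^ 2 - 4 * m ^ 2 = (qb - 2 * m) * (qb + 2 * m) := by ring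
  have hωpos : 0 < ω := by
    rw [hω, hprod]; exact Real.sqrt_pos.mpr (by positivity)
  have hω2 : ω ^ 2 = (qb - 2 * m) * (qb + 2 * m) := by
    rw [hω, hprod, Real.sq_sqrt (by positivity)]
  set a := Real.sqrt ((qb - 2 * m) / (qb + 2 * m)) with ha_def
  have ha2 : a ^ 2 = (qb - 2 * m) / (qb + 2 * m) :=
    Real.sq_sqrt (by positivity)
  have ha2' : a ^ 2 * (qb + 2 * m) = qb - 2 * m := by
    rw [ha2]; field_simp
  have hanneg : 0 ≤ a := Real.sqrt_nonneg _
  have haω : a * ω = qb - 2 * m := by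
    have h : (a * ω) ^ 2 = (qb - 2 * m) ^ 2 := by
      rw [mul_pow, hω2, ha2]; field_simp
    nlinarith [mul_nonneg hanneg hωpos.le]
  have hUfun : U = fun s => 2 * Real.arctan (a * Real.tan (ω * s / 2)) := funext hU
  constructor
  · simp [hU]
  · intro s hs
    have hθ1 : -(Real.pi / 2) < ω * s / 2 := by
      have := hs.1
      have h' : -(Real.pi) < ω * s := by
        rw [neg_lt] at this ⊢
        calc -(ω * s) = ω * (-s) := by ring
        _ < ω * (Real.pi / ω) := by
          exact mul_lt_mul_of_pos_left this hωpos
        _ = Real.pi := by field_simp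
      linarith
    have hθ2 : ω * s / 2 < Real.pi / 2 := by
      have := hs.2
      have h' : ω * s < Real.pi := by
        calc ω * s < ω * (Real.pi / ω) := mul_lt_mul_of_pos_left this hωpos
        _ = Real.pi := by field_simp
      linarith
    have hcos : 0 < Real.cos (ω * s / 2) := Real.cos_pos_of_mem_Ioo ⟨hθ1, hθ2⟩
    set t := Real.tan (ω * s / 2) with ht_def
    have htsq : t ^ 2 + 1 = 1 / Real.cos (ω * s / 2) ^ 2 := by
      rw [ht_def, Real.tan_eq_sin_div_cos]
      field_simp
      exact Real.sin_sq_add_cos_sq _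
    have d1 : HasDerivAt (fun x : ℝ => ω * x / 2) (ω / 2) s := by
      simpa using ((hasDerivAt_id s).const_mul ω).div_const 2
    have d2 : HasDerivAt (fun x : ℝ => Real.tan (ω * x / 2))
        (1 / Real.cos (ω * s / 2) ^ 2 * (ω / 2)) s :=
      by have := (Real.hasDerivAt_tan hcos.ne').comp s d1; exact this
    have d3 : HasDerivAt (fun x : ℝ => a * Real.tan (ω * x / 2))
        (a * (1 / Real.cos (ω * s / 2) ^ 2 * (ω / 2))) s := d2.const_mul a
    have d4 : HasDerivAt (fun x : ℝ => 2 * Real.arctan (a * Real.tan (ω * x / 2)))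
        (2 * (1 / (1 + (a * t) ^ 2) * (a * (1 / Real.cos (ω * s / 2) ^ 2 * (ω / 2))))) s :=
      by have := ((Real.hasDerivAt_arctan (a * t)).comp s d3).const_mul 2; exact this
    rw [hUfun]
    convert d4 using 1
    have hden : 0 < 1 + (a * t) ^ 2 := by positivity
    have hcosU : Real.cos (2 * Real.arctan (a * t)) = 2 * (1 / (1 + (a * t) ^ 2)) - 1 := by
      rw [Real.cos_two_mul, Real.cos_sq_arctan]
    simp only [hU, hcosU, ← ht_def, ← htsq]
    field_simp
    linear_combination (-(1 + t ^ 2)) * haω + t ^ 2 * ha2'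
end

section
/- Let σ ∈ (0, π), q̄ > 2·sin σ, r̄ > 0 and x₀ ∈ ℝ, and let U : ℝ → ℝ be differentiable with U'(s) = q̄ − 2·sin σ·cos U(s) for all s. Define x(s) = 2r̄·sin σ·sin U(s) + x₀ and y(s) = r̄·(q̄ − 2·sin σ·cos U(s)). Then y(s) > 0, x'(s) = 2y(s)·sin σ·cos U(s) and y'(s) = 2y(s)·sin σ·sin U(s) for all s; in particular x'² + y'² = 4y²·sin²σ, and the unit-speed reparametrization β̄(s̄) = (x(s̄/sin σ), y(s̄/sin σ)) has constant signed curvature q̄/sin σ in H²(−4), i.e. it satisfies (x'y'' − x''y')/(4y²) + x'/y = q̄/sin σ with respect to the arclength parameter s̄. -/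
/-- The projection to H²(−4) of a contact magnetic curve of contact angle σ in SL(2,ℝ):
with U' = q̄ − 2 sin σ cos U, the curve x = 2r̄ sinσ sin U + x₀, y = r̄(q̄ − 2 sinσ cos U)
lies in the upper half-plane, has speed sin σ, and its unit-speed reparametrization has
constant signed curvature q̄/sin σ. -/
theorem magnetic_projection_circle (σ qb rb x₀ : ℝ) (hσ : σ ∈ Set.Ioo 0 Real.pi)
    (hq : 2 * Real.sin σ < qb) (hr : 0 < rb)
    (U : ℝ → ℝ) (hU : ∀ s, HasDerivAt U (qb - 2 * Real.sin σ * Real.cos (U s)) s)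
    (x y xb yb : ℝ → ℝ)
    (hx : ∀ s, x s = 2 * rb * Real.sin σ * Real.sin (U s) + x₀)
    (hy : ∀ s, y s = rb * (qb - 2 * Real.sin σ * Real.cos (U s)))
    (hxb : ∀ s, xb s = x (s / Real.sin σ))
    (hyb : ∀ s, yb s = y (s / Real.sin σ)) :
    (∀ s, 0 < y s) ∧
    (∀ s, deriv x s = 2 * y s * Real.sin σ * Real.cos (U s)) ∧
    (∀ s, deriv y s = 2 * y s * Real.sin σ * Real.sin (U s)) ∧
    (∀ s, (deriv x s) ^ 2 + (deriv y s) ^ 2 = 4 * (y s) ^ 2 * Real.sin σ ^ 2) ∧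
    (∀ s,
      (deriv xb s * deriv (deriv yb) s - deriv (deriv xb) s * deriv yb s) / (4 * (yb s) ^ 2)
        + deriv xb s / yb s = qb / Real.sin σ) := by
  obtain ⟨hσ0, hσπ⟩ := hσ
  have hc : 0 < Real.sin σ := Real.sin_pos_of_pos_of_lt_pi hσ0 hσπ
  set c := Real.sin σ with hcdef
  have hcne : c ≠ 0 := ne_of_gt hc
  have hypos : ∀ s, 0 < y s := by
    intro s
    rw [hy]
    apply mul_pos hr
    have h1 : Real.cos (U s) ≤ 1 := Real.cos_le_one _
    have h2 : -1 ≤ Real.cos (U s) := Real.neg_one_le_cos _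
    nlinarith
  have hxfun : x = fun s => 2 * rb * c * Real.sin (U s) + x₀ := funext hx
  have hyfun : y = fun s => rb * (qb - 2 * c * Real.cos (U s)) := funext hy
  have hxd : ∀ s, HasDerivAt x (2 * y s * c * Real.cos (U s)) s := by
    intro s
    rw [hxfun]
    have h1 : HasDerivAt (fun s => Real.sin (U s))
        (Real.cos (U s) * (qb - 2 * c * Real.cos (U s))) s :=
      (Real.hasDerivAt_sin (U s)).comp s (hU s)
    have h2 := (h1.const_mul (2 * rb * c)).add_const x₀
    refine h2.congr_deriv ?_
    rw [hy]; ring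
  have hyd : ∀ s, HasDerivAt y (2 * y s * c * Real.sin (U s)) s := by
    intro s
    rw [hyfun]
    have h1 : HasDerivAt (fun s => Real.cos (U s))
        (-Real.sin (U s) * (qb - 2 * c * Real.cos (U s))) s :=
      (Real.hasDerivAt_cos (U s)).comp s (hU s)
    have h2 := ((h1.const_mul (2 * c)).const_sub qb).const_mul rb
    refine h2.congr_deriv ?_
    ring
  refine ⟨hypos, fun s => (hxd s).deriv, fun s => (hyd s).deriv, ?_, ?_⟩
  · intro s
    rw [(hxd s).deriv, (hyd s).deriv]
    have := Real.sin_sq_add_cos_sq (U s)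
    nlinarith [this]
  · -- curvature computation
    have hxbfun : xb = fun t => x (t / c) := funext hxb
    have hybfun : yb = fun t => y (t / c) := funext hyb
    have hVd : ∀ s, HasDerivAt (fun t => U (t / c))
        ((qb - 2 * c * Real.cos (U (s / c))) / c) s := by
      intro s
      have h := (hU (s / c)).comp s ((hasDerivAt_id s).div_const c)
      simp only [Function.comp, id] at h
      refine h.congr_deriv ?_
      field_simp
    have hxbd : ∀ s, HasDerivAt xb (2 * yb s * Real.cos (U (s / c))) s := by
      intro s
      rw [hxbfun]
      have h := (hxd (s / c)).comp s ((hasDerivAt_id s).div_const c)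
      simp only [Function.comp, id] at h
      refine h.congr_deriv ?_
      rw [hyb]
      field_simp
    have hybd : ∀ s, HasDerivAt yb (2 * yb s * Real.sin (U (s / c))) s := by
      intro s
      rw [hybfun]
      have h := (hyd (s / c)).comp s ((hasDerivAt_id s).div_const c)
      simp only [Function.comp, id] at h
      refine h.congr_deriv ?_
      show _ = 2 * y (s / c) * Real.sin (U (s / c))
      field_simp
    have hdxb : deriv xb = fun t => 2 * yb t * Real.cos (U (t / c)) :=
      funext fun t => (hxbd t).deriv
    have hdyb : deriv yb = fun t => 2 * yb t * Real.sin (U (t / c)) :=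
      funext fun t => (hybd t).deriv
    have hsinV : ∀ s, HasDerivAt (fun t => Real.sin (U (t / c)))
        (Real.cos (U (s / c)) * ((qb - 2 * c * Real.cos (U (s / c))) / c)) s :=
      fun s => (Real.hasDerivAt_sin _).comp s (hVd s)
    have hcosV : ∀ s, HasDerivAt (fun t => Real.cos (U (t / c)))
        (-Real.sin (U (s / c)) * ((qb - 2 * c * Real.cos (U (s / c))) / c)) s :=
      fun s => (Real.hasDerivAt_cos _).comp s (hVd s)
    have hyb2 : ∀ s, HasDerivAt (fun t => 2 * yb t * Real.sin (U (t / c)))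
        (2 * (2 * yb s * Real.sin (U (s / c))) * Real.sin (U (s / c))
          + 2 * yb s * (Real.cos (U (s / c)) * ((qb - 2 * c * Real.cos (U (s / c))) / c))) s := by
      intro s
      exact ((hybd s).const_mul 2).mul (hsinV s)
    have hxb2 : ∀ s, HasDerivAt (fun t => 2 * yb t * Real.cos (U (t / c)))
        (2 * (2 * yb s * Real.sin (U (s / c))) * Real.cos (U (s / c))
          + 2 * yb s * (-Real.sin (U (s / c)) * ((qb - 2 * c * Real.cos (U (s / c))) / c))) s := by
      intro s
      exact ((hybd s).const_mul 2).mul (hcosV s)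
    intro s
    have hA : yb s ≠ 0 := by rw [hyb]; exact (hypos _).ne'
    rw [hdxb, hdyb]
    simp only []
    rw [(hyb2 s).deriv, (hxb2 s).deriv]
    have hpy : Real.sin (U (s / c)) ^ 2 + Real.cos (U (s / c)) ^ 2 = 1 :=
      Real.sin_sq_add_cos_sq _
    field_simp
    linear_combination (4 * qb - 8 * c * Real.cos (U (s / c))) * hpy
end

section
/- Let a, b, c ∈ ℝ with b ≠ 0 and c² + 2ab = 0, and set X = [[c, √2·a],[√2·b, −c]] (so X ∈ sl(2,ℝ) with det X = 0). For t ∈ ℝ let p(t) = exp(tX) = I + tX, and define the Iwasawa projection coordinates x(t) = (p₁₁(t)p₂₁(t) + p₁₂(t)p₂₂(t))/(p₂₁(t)² + p₂₂(t)²) and y(t) = 1/(p₂₁(t)² + p₂₂(t)²). Then p₂₁(t)² + p₂₂(t)² > 0, b ≠ a, and for all t: (x(t) − c/(√2·b))² + (y(t) − (b−a)/(2b))² = ((b−a)/(2b))². In particular the projection of the one-parameter subgroup exp(tX) lies on a Euclidean circle tangent to the boundary line y = 0, i.e. a horocycle of H²(−4). -/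
open Matrix

lemma exp_of_sq_zero (A : Matrix (Fin 2) (Fin 2) ℝ) (h : A ^ 2 = 0) :
    NormedSpace.exp A = 1 + A := by
  rw [NormedSpace.exp_eq_tsum (𝕂 := ℝ)]
  show (∑' n : ℕ, ((n.factorial : ℝ))⁻¹ • A ^ n) = 1 + A
  rw [tsum_eq_sum (s := Finset.range 2) (f := fun n : ℕ => ((n.factorial : ℝ))⁻¹ • A ^ n)
    (fun n hn => ?_)]
  · simp [Finset.sum_range_succ]
  · have : A ^ n = 0 := pow_eq_zero_of_le (by simp at hn; omega) h
    simp [this]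

/-- The projection of the one-parameter subgroup exp(tX), X = aE₁+bE₂+cE₃ with det X = 0
(i.e. c² + 2ab = 0) and b ≠ 0, under the hyperbolic Hopf fibering lies on the horocycle
(x − c/(√2 b))² + (y − (b−a)/(2b))² = ((b−a)/(2b))² of H²(−4). -/
theorem parabolic_one_parameter_projects_to_horocycle (a b c : ℝ)
    (hb : b ≠ 0) (hc : c ^ 2 + 2 * a * b = 0)
    (X : Matrix (Fin 2) (Fin 2) ℝ)
    (hX : X = !![c, Real.sqrt 2 * a; Real.sqrt 2 * b, -c])
    (p : ℝ → Matrix (Fin 2) (Fin 2) ℝ)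
    (hp : ∀ t, p t = NormedSpace.exp (t • X))
    (x y : ℝ → ℝ)
    (hx : ∀ t, x t = (p t 0 0 * p t 1 0 + p t 0 1 * p t 1 1) /
      ((p t 1 0) ^ 2 + (p t 1 1) ^ 2))
    (hy : ∀ t, y t = 1 / ((p t 1 0) ^ 2 + (p t 1 1) ^ 2)) :
    (∀ t, p t = 1 + t • X) ∧
    (∀ t, 0 < (p t 1 0) ^ 2 + (p t 1 1) ^ 2) ∧
    b ≠ a ∧
    (∀ t, (x t - c / (Real.sqrt 2 * b)) ^ 2 + (y t - (b - a) / (2 * b)) ^ 2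
        = ((b - a) / (2 * b)) ^ 2) := by
  have hs : Real.sqrt 2 ^ 2 = 2 := Real.sq_sqrt (by norm_num)
  have hs0 : Real.sqrt 2 ≠ 0 := by positivity
  set s : ℝ := Real.sqrt 2 with hsdef
  -- X² = 0
  have hX2 : X ^ 2 = 0 := by
    rw [pow_two, hX]
    ext i j
    fin_cases i <;> fin_cases j <;>
      simp [Matrix.mul_apply, Fin.sum_univ_succ] <;> nlinarith [hs, hc]
  -- exp(tX) = 1 + tX
  have hp1 : ∀ t, p t = 1 + t • X := by
    intro t
    rw [hp t, exp_of_sq_zero]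
    rw [smul_pow, hX2, smul_zero]
  -- entries
  have h00 : ∀ t, p t 0 0 = 1 + t * c := by
    intro t; rw [hp1 t, hX]; simp [Matrix.one_apply]
  have h01 : ∀ t, p t 0 1 = t * (s * a) := by
    intro t; rw [hp1 t, hX]; simp [Matrix.one_apply]
  have h10 : ∀ t, p t 1 0 = t * (s * b) := by
    intro t; rw [hp1 t, hX]; simp [Matrix.one_apply]
  have h11 : ∀ t, p t 1 1 = 1 - t * c := by
    intro t; rw [hp1 t, hX]; simp [Matrix.one_apply]; ring
  -- positivity
  have hpos : ∀ t, 0 < (p t 1 0) ^ 2 + (p t 1 1) ^ 2 := by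
    intro t
    rw [h10 t, h11 t]
    rcases eq_or_ne t 0 with rfl | ht
    · norm_num
    · have h1 : 0 < (t * (s * b)) ^ 2 := by positivity
      nlinarith [sq_nonneg (1 - t * c)]
  refine ⟨hp1, hpos, ?_, ?_⟩
  · intro hba
    rw [hba] at hc hb
    exact hb (by nlinarith [sq_nonneg c, sq_nonneg a])
  · intro t
    have hDval : (p t 1 0) ^ 2 + (p t 1 1) ^ 2 = 2 * b ^ 2 * t ^ 2 + (1 - t * c) ^ 2 := by
      rw [h10 t, h11 t]; linear_combination (t ^ 2 * b ^ 2) * hs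
    set D : ℝ := 2 * b ^ 2 * t ^ 2 + (1 - t * c) ^ 2 with hDdef
    have hDpos : 0 < D := hDval ▸ hpos t
    have hD0 : D ≠ 0 := ne_of_gt hDpos
    set M : ℝ := 2 * b * t * (b + a + t * c * (b - a)) - c * D with hMdef
    have hq : M ^ 2 + 2 * b ^ 2 - 2 * b * (b - a) * D = 0 := by
      rw [hMdef, hDdef]
      linear_combination (1 - 4*c*t + 6*c^2*t^2 - 4*c^3*t^3 + c^4*t^4 + 6*b^2*t^2
        - 4*b^2*c*t^3 + 2*a*b*t^2 - 4*a*b*c*t^3 + 2*a*b*c^2*t^4) * hc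
    have hsb : s * b ≠ 0 := mul_ne_zero hs0 hb
    have hxv : x t - c / (s * b) = M / (s * b * D) := by
      rw [hx t, hDval, h00 t, h01 t, h10 t, h11 t]
      rw [div_sub_div _ _ hD0 hsb, div_eq_div_iff (mul_ne_zero hD0 hsb) (mul_ne_zero hsb hD0)]
      rw [hMdef, hDdef]
      linear_combination (s * b * (2 * b ^ 2 * t ^ 2 + (1 - t * c) ^ 2) * b * t *
        (b + a + t * c * (b - a))) * hs
    have hyv : y t = 1 / D := by rw [hy t, hDval]
    rw [hxv, hyv, div_pow, mul_pow, mul_pow, hs]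
    have goal' : M ^ 2 / (2 * b ^ 2 * D ^ 2) + (1 / D - (b - a) / (2 * b)) ^ 2
        - ((b - a) / (2 * b)) ^ 2
        = (M ^ 2 + 2 * b ^ 2 - 2 * b * (b - a) * D) / (2 * b ^ 2 * D ^ 2) := by
      field_simp
      ring
    have hz : M ^ 2 / (2 * b ^ 2 * D ^ 2) + (1 / D - (b - a) / (2 * b)) ^ 2
        - ((b - a) / (2 * b)) ^ 2 = 0 := by rw [goal', hq]; simp
    linarith
end

section
/- Let a, c ∈ ℝ with a ≠ 0 and 2a² − c² > 0, and set X = [[c, √2·a],[−√2·a, −c]] (so X = a(E₁ − E₂) + cE₃ ∈ sl(2,ℝ) with det X = 2a² − c² > 0). For t ∈ ℝ let p(t) = exp(tX), and define x(t) = (p₁₁(t)p₂₁(t) + p₁₂(t)p₂₂(t))/(p₂₁(t)² + p₂₂(t)²), y(t) = 1/(p₂₁(t)² + p₂₂(t)²). Then p₂₁(t)² + p₂₂(t)² > 0 and for all t: (x(t) + c/(√2·a))² + (y(t) − 1)² = c²/(2a²). In particular the projection of the one-parameter subgroup exp(tX) to H²(−4) lies on a Euclidean circle of center (−c/(√2 a),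 1) and radius |c|/(√2|a|). -/
set_option maxHeartbeats 2000000

open Matrix

/-- The projection of the one-parameter subgroup exp(tX), X = a(E₁−E₂)+cE₃ with
det X = 2a² − c² > 0 and a ≠ 0, under the hyperbolic Hopf fibering lies on the Euclidean
circle (x + c/(√2 a))² + (y − 1)² = c²/(2a²) in H²(−4). -/
theorem elliptic_one_parameter_projection (a c : ℝ)
    (ha : a ≠ 0) (hd : 0 < 2 * a ^ 2 - c ^ 2)
    (X : Matrix (Fin 2) (Fin 2) ℝ)
    (hX : X = !![c, Real.sqrt 2 * a; -(Real.sqrt 2 * a), -c])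
    (p : ℝ → Matrix (Fin 2) (Fin 2) ℝ)
    (hp : ∀ t, p t = NormedSpace.exp (t • X))
    (x y : ℝ → ℝ)
    (hx : ∀ t, x t = (p t 0 0 * p t 1 0 + p t 0 1 * p t 1 1) /
      ((p t 1 0) ^ 2 + (p t 1 1) ^ 2))
    (hy : ∀ t, y t = 1 / ((p t 1 0) ^ 2 + (p t 1 1) ^ 2)) :
    (∀ t, 0 < (p t 1 0) ^ 2 + (p t 1 1) ^ 2) ∧
    (∀ t, (x t + c / (Real.sqrt 2 * a)) ^ 2 + (y t - 1) ^ 2 = c ^ 2 / (2 * a ^ 2)) := by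
  letI : SeminormedRing (Matrix (Fin 2) (Fin 2) ℝ) := Matrix.linftyOpSemiNormedRing
  letI : NormedRing (Matrix (Fin 2) (Fin 2) ℝ) := Matrix.linftyOpNormedRing
  letI : NormedAlgebra ℝ (Matrix (Fin 2) (Fin 2) ℝ) := Matrix.linftyOpNormedAlgebra
  have h2 : Real.sqrt 2 ^ 2 = 2 := Real.sq_sqrt (by norm_num)
  have hr2 : Real.sqrt 2 ≠ 0 := by positivity
  set ω : ℝ := Real.sqrt (2 * a ^ 2 - c ^ 2) with hωdef
  have hω2 : ω ^ 2 = 2 * a ^ 2 - c ^ 2 := Real.sq_sqrt hd.le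
  have hωpos : 0 < ω := Real.sqrt_pos.mpr hd
  have hωne : ω ≠ 0 := hωpos.ne'
  set A : Matrix (Fin 2) (Fin 2) ℝ := ω⁻¹ • X with hA
  have hXX : X * X = (c ^ 2 - 2 * a ^ 2) • (1 : Matrix (Fin 2) (Fin 2) ℝ) := by
    rw [hX]
    ext i j
    fin_cases i <;> fin_cases j <;>
      simp [Matrix.mul_apply, Fin.sum_univ_succ, Matrix.one_apply] <;> nlinarith [h2]
  have hAA : A * A = -1 := by
    rw [hA, smul_mul_smul_comm, hXX, smul_smul]
    have hh : ω⁻¹ * ω⁻¹ * (c ^ 2 - 2 * a ^ 2) = -1 := by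
      field_simp
      nlinarith [hω2]
    rw [hh, neg_smul, one_smul]
  set f : ℂ →ₐ[ℝ] Matrix (Fin 2) (Fin 2) ℝ := Complex.liftAux A hAA with hf
  have hfc : Continuous f := f.toLinearMap.continuous_of_finiteDimensional
  have key : ∀ t : ℝ, p t = Real.cos (t * ω) • (1 : Matrix (Fin 2) (Fin 2) ℝ)
      + (Real.sin (t * ω) * ω⁻¹) • X := by
    intro t
    have h1 : t • X = f (((t * ω : ℝ) : ℂ) * Complex.I) := by
      rw [hf, Complex.liftAux_apply]
      simp [hA, smul_smul]
      rw [mul_assoc, mul_inv_cancel₀ hωne, mul_one]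
    rw [hp, h1]
    refine (NormedSpace.map_exp f hfc _).symm.trans ?_
    rw [show NormedSpace.exp (((t * ω : ℝ) : ℂ) * Complex.I)
        = Complex.exp (((t * ω : ℝ) : ℂ) * Complex.I) from
      (congr_fun Complex.exp_eq_exp_ℂ.symm _)]
    rw [hf, Complex.liftAux_apply]
    rw [Complex.exp_ofReal_mul_I_re, Complex.exp_ofReal_mul_I_im]
    rw [Algebra.algebraMap_eq_smul_one, hA, smul_smul]
  -- entries
  have e10 : ∀ t, p t 1 0 = -(Real.sin (t * ω) * ω⁻¹ * (Real.sqrt 2 * a)) := by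
    intro t; rw [key t, hX]; simp [Matrix.one_apply]; try ring
  have e11 : ∀ t, p t 1 1 = Real.cos (t * ω) - Real.sin (t * ω) * ω⁻¹ * c := by
    intro t; rw [key t, hX]; simp [Matrix.one_apply]; try ring
  have e00 : ∀ t, p t 0 0 = Real.cos (t * ω) + Real.sin (t * ω) * ω⁻¹ * c := by
    intro t; rw [key t, hX]; simp [Matrix.one_apply]; try ring
  have e01 : ∀ t, p t 0 1 = Real.sin (t * ω) * ω⁻¹ * (Real.sqrt 2 * a) := by
    intro t; rw [key t, hX]; simp [Matrix.one_apply]; try ring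
  have hDpos : ∀ t, 0 < (p t 1 0) ^ 2 + (p t 1 1) ^ 2 := by
    intro t
    rw [e10, e11]
    set S := Real.sin (t * ω)
    set C := Real.cos (t * ω)
    have hSC : S ^ 2 + C ^ 2 = 1 := Real.sin_sq_add_cos_sq _
    by_cases hS : S = 0
    · have hC : C ^ 2 = 1 := by nlinarith
      rw [hS]; simp; nlinarith
    · have hne : -(S * ω⁻¹ * (Real.sqrt 2 * a)) ≠ 0 := by
        simp only [neg_ne_zero]
        exact mul_ne_zero (mul_ne_zero hS (inv_ne_zero hωne)) (mul_ne_zero hr2 ha)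
      have h1 : 0 < (-(S * ω⁻¹ * (Real.sqrt 2 * a))) ^ 2 :=
        lt_of_le_of_ne (sq_nonneg _) (Ne.symm (pow_ne_zero 2 hne))
      nlinarith [sq_nonneg (C - S * ω⁻¹ * c)]
  refine ⟨hDpos, fun t => ?_⟩
  have hD := hDpos t
  rw [hx, hy, e10, e11, e00, e01]
  rw [e10, e11] at hD
  set S := Real.sin (t * ω) with hSdef
  set C := Real.cos (t * ω) with hCdef
  have hSC : S ^ 2 + C ^ 2 = 1 := Real.sin_sq_add_cos_sq _
  set s : ℝ := Real.sqrt 2 * a with hs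
  have hs2 : s ^ 2 = 2 * a ^ 2 := by rw [hs, mul_pow, h2]
  have hsne : s ≠ 0 := mul_ne_zero hr2 ha
  set u : ℝ := S * ω⁻¹ with hu
  have hS : S = u * ω := by rw [hu, mul_assoc, inv_mul_cancel₀ hωne, mul_one]
  have hC2 : C ^ 2 = 1 - u ^ 2 * (s ^ 2 - c ^ 2) := by
    have hss : S ^ 2 = u ^ 2 * ω ^ 2 := by rw [hS]; ring
    nlinarith [hSC, hω2, hs2]
  set N : ℝ := (C + u * c) * -(u * s) + u * s * (C - u * c) with hNdef
  set D : ℝ := (-(u * s)) ^ 2 + (C - u * c) ^ 2 with hDdef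
  have hDne : D ≠ 0 := ne_of_gt hD
  clear_value S C
  have h1D : 1 - D = 2 * u * c * (C - u * c) := by
    rw [hDdef]; linear_combination -hC2
  have Q : (N * s + c * D) ^ 2 + s ^ 2 * (1 - D) ^ 2 = c ^ 2 * D ^ 2 := by
    rw [h1D, hNdef, hDdef]; ring
  have hD2s2 : D ^ 2 * s ^ 2 ≠ 0 := by positivity
  have expand : (N / D + c / s) ^ 2 + (1 / D - 1) ^ 2
      = ((N * s + c * D) ^ 2 + s ^ 2 * (1 - D) ^ 2) / (D ^ 2 * s ^ 2) := by
    rw [div_add_div _ _ hDne hsne, div_pow, eq_div_iff hD2s2]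
    have e1 : 1 / D - 1 = (1 - D) / D := by
      rw [sub_div, div_self hDne]
    rw [e1, div_pow, div_add_div _ _ (pow_ne_zero 2 (mul_ne_zero hDne hsne))
      (pow_ne_zero 2 hDne), div_mul_eq_mul_div, div_eq_iff
      (mul_ne_zero (pow_ne_zero 2 (mul_ne_zero hDne hsne)) (pow_ne_zero 2 hDne))]
    ring
  rw [expand, Q, ← hs2, mul_comm (D ^ 2) (s ^ 2), mul_comm (c ^ 2) (D ^ 2)]
  rw [mul_comm (s ^ 2) (D ^ 2)]
  exact mul_div_mul_left _ _ (pow_ne_zero 2 hDne)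
end
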